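/- For positive definite Q and positive semidefinite symmetric matrices Λ_b, Λ_u (all n×n) with Λ_b + Λ_u invertible, and any n×k matrix A, the matrix Aᵀ Q⁻¹ (Q⁻¹ + Λ_b + Λ_u)⁻¹ (Λ_b + Λ_u) A is symmetric positive semidefinite. -/

import Mathlib

open Matrix

lemma posDef_of_posSemidef_isUnit {n : ℕ} {M : Matrix (Fin n) (Fin n) ℝ}
    (h : M.PosSemidef) (hu : IsUnit M) : M.PosDef := by
  refine Matrix.posDef_iff_dotProduct_mulVec.mpr ⟨h.1, fun x hx => ?_⟩
  rcases lt_or_eq_of_le (h.dotProduct_mulVec_nonneg x) with hlt | heq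
  · exact hlt
  · exfalso
    have h0 : M *ᵥ x = 0 := (h.dotProduct_mulVec_zero_iff x).mp heq.symm
    have hinj := Matrix.mulVec_injective_iff_isUnit.mpr hu
    exact hx (hinj (by simpa using h0))

theorem backward_precision_psd {n k : ℕ}
    (Q Λb Λu : Matrix (Fin n) (Fin n) ℝ) (A : Matrix (Fin n) (Fin k) ℝ)
    (hQ : Q.PosDef) (hb : Λb.PosSemidef) (hu : Λu.PosSemidef)
    (hinv : IsUnit (Λb + Λu)) :
    (Aᵀ * Q⁻¹ * (Q⁻¹ + Λb + Λu)⁻¹ * (Λb + Λu) * A).PosSemidef := by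
  set Λ := Λb + Λu with hΛ
  have hΛpd : Λ.PosDef := posDef_of_posSemidef_isUnit (hb.add hu) hinv
  have hQi : Q⁻¹.PosDef := hQ.inv
  have hS : (Q⁻¹ + Λ).PosDef := hQi.add_posSemidef hΛpd.posSemidef
  have hM : (Λ⁻¹ + Q).PosDef := hΛpd.inv.add_posSemidef hQ.posSemidef
  have key : Q⁻¹ * (Q⁻¹ + Λ)⁻¹ * Λ = (Λ⁻¹ + Q)⁻¹ := by
    have h1 : Λ⁻¹ * (Q⁻¹ + Λ) * Q = Λ⁻¹ + Q := by
      have : Λ⁻¹ * Q⁻¹ * Q = Λ⁻¹ := by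
        rw [Matrix.mul_assoc, Matrix.nonsing_inv_mul Q hQ.det_pos.ne'.isUnit, Matrix.mul_one]
      rw [Matrix.mul_add, Matrix.add_mul, this,
        Matrix.nonsing_inv_mul Λ hΛpd.det_pos.ne'.isUnit, Matrix.one_mul]
    calc Q⁻¹ * (Q⁻¹ + Λ)⁻¹ * Λ = (Λ⁻¹ * (Q⁻¹ + Λ) * Q)⁻¹ := by
          rw [Matrix.mul_inv_rev, Matrix.mul_inv_rev,
            Matrix.nonsing_inv_nonsing_inv Λ hΛpd.det_pos.ne'.isUnit, Matrix.mul_assoc]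
      _ = (Λ⁻¹ + Q)⁻¹ := by rw [h1]
  have hrw : Aᵀ * Q⁻¹ * (Q⁻¹ + Λ)⁻¹ * Λ * A = Aᴴ * (Λ⁻¹ + Q)⁻¹ * A := by
    rw [show (Aᵀ : Matrix (Fin k) (Fin n) ℝ) = Aᴴ from (Matrix.conjTranspose_eq_transpose_of_trivial A).symm,
      Matrix.mul_assoc Aᴴ, Matrix.mul_assoc Aᴴ, key]
  rw [show Q⁻¹ + Λb + Λu = Q⁻¹ + Λ by rw [hΛ, add_assoc], hrw]
  exact hM.inv.posSemidef.conjTranspose_mul_mul_same A
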